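/- In the all-continuous-normal (CCC) model, NIE(x₀, x₁; w) = σ_y αβ (z_{x₁} − z_{x₀}) / τ_y, where z_x = (x − μ_x)/σ_x and τ_y = √((γ+αβ)² + β² + 1). -/

import Mathlib

open MeasureTheory ProbabilityTheory
open scoped ENNReal NNReal

lemma std_gaussian_pdf_mul_integrable :
    Integrable (fun x : ℝ => x * gaussianPDFReal 0 1 x) := by
  have h : (fun x : ℝ => x * gaussianPDFReal 0 1 x)
      = fun x : ℝ => (Real.sqrt (2 * Real.pi))⁻¹ * (x * Real.exp (-(1/2 : ℝ) * x ^ 2)) := by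
    ext x
    simp only [gaussianPDFReal, NNReal.coe_one, mul_one, sub_zero]
    ring_nf
  rw [h]
  exact (integrable_mul_exp_neg_mul_sq (by norm_num : (0:ℝ) < 1/2)).const_mul _

lemma integral_mul_std_gaussian_pdf : ∫ x : ℝ, x * gaussianPDFReal 0 1 x = 0 := by
  have hodd : ∀ x : ℝ, (-x) * gaussianPDFReal 0 1 (-x) = -(x * gaussianPDFReal 0 1 x) := by
    intro x
    simp only [gaussianPDFReal, NNReal.coe_one, mul_one, sub_zero, neg_sq]
    ring
  have h := integral_neg_eq_self (fun x : ℝ => x * gaussianPDFReal 0 1 x) volume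
  simp_rw [hodd, integral_neg] at h
  linarith

lemma integrable_id_std_gaussian : Integrable (fun x : ℝ => x) (gaussianReal 0 1) := by
  rw [gaussianReal_of_var_ne_zero _ one_ne_zero,
    integrable_withDensity_iff (measurable_gaussianPDF _ _)
      (ae_of_all _ fun x => ENNReal.ofReal_lt_top)]
  have : (fun x : ℝ => x * (gaussianPDF 0 1 x).toReal)
      = fun x : ℝ => x * gaussianPDFReal 0 1 x := by
    ext x
    rw [gaussianPDF, ENNReal.toReal_ofReal (gaussianPDFReal_nonneg _ _ _)]
  rw [this]
  exact std_gaussian_pdf_mul_integrable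

lemma integral_id_std_gaussian : ∫ x, x ∂(gaussianReal 0 1) = 0 := by
  rw [gaussianReal_of_var_ne_zero _ one_ne_zero]
  have : gaussianPDF 0 1 = fun x => ((gaussianPDFReal 0 1 x).toNNReal : ℝ≥0∞) := rfl
  rw [this, integral_withDensity_eq_integral_smul
    (by exact (measurable_gaussianPDFReal 0 1).real_toNNReal) (fun x : ℝ => x)]
  have : (fun x : ℝ => (gaussianPDFReal 0 1 x).toNNReal • x)
      = fun x : ℝ => x * gaussianPDFReal 0 1 x := by
    ext x
    simp [NNReal.smul_def, Real.coe_toNNReal _ (gaussianPDFReal_nonneg _ _ _), mul_comm]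
  rw [this, integral_mul_std_gaussian_pdf]

lemma integral_id_gaussianReal (m : ℝ) : ∫ x, x ∂(gaussianReal m 1) = m := by
  have h : gaussianReal m 1 = (gaussianReal 0 1).map (· + m) := by
    rw [gaussianReal_map_add_const, zero_add]
  rw [h, integral_map (by fun_prop) measurable_id'.aestronglyMeasurable]
  rw [integral_add integrable_id_std_gaussian (integrable_const m)]
  simp [integral_id_std_gaussian]

/-- CCC model: the natural indirect effect equals `σ_y αβ (z_{x₁} − z_{x₀}) / τ_y`. -/
theorem ccc_nie (α β γ μx μy σx σy x0 x1 : ℝ) (hσx : 0 < σx) :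
    let τy := Real.sqrt ((γ + α * β) ^ 2 + β ^ 2 + 1)
    let zx := fun x => (x - μx) / σx
    let condY := fun (z m : ℝ) => μy + σy * (γ * z + β * m) / τy
    let CF := fun xa xb => ∫ m, condY (zx xa) m ∂(gaussianReal (α * zx xb) 1)
    CF x1 x1 - CF x1 x0 = σy * (α * β) * (zx x1 - zx x0) / τy := by
  intro τy zx condY CF
  have hCF : ∀ xa xb : ℝ, CF xa xb = μy + σy * (γ * zx xa + β * (α * zx xb)) / τy := by
    intro xa xb
    have hint : Integrable (fun x : ℝ => x) (gaussianReal (α * zx xb) 1) := by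
      have h : gaussianReal (α * zx xb) 1 = (gaussianReal 0 1).map (· + α * zx xb) := by
        rw [gaussianReal_map_add_const, zero_add]
      rw [h, integrable_map_measure measurable_id'.aestronglyMeasurable (by fun_prop)]
      exact integrable_id_std_gaussian.add (integrable_const _)
    have : CF xa xb = ∫ m, (μy + σy * γ * zx xa / τy) + (σy * β / τy) * m
        ∂(gaussianReal (α * zx xb) 1) := by
      apply integral_congr_ae
      filter_upwards with m
      simp only [condY]
      ring
    rw [this, integral_add (integrable_const _) (hint.const_mul _),
      integral_const, integral_const_mul, _root_.integral_id_gaussianReal]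
    simp only [measure_univ, probReal_univ, ENNReal.toReal_one, smul_eq_mul, one_mul]
    ring
  rw [hCF x1 x1, hCF x1 x0]
  ring
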